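/- arXiv:1005.0882 — 2 statements merged into one kernel-verified Lean document; each statement's English description precedes it below -/
import Mathlib

section
/- For every U' ∈ B⁺, U' →*_{R_S} ρ(φ(U')). -/
/-- A rewriting system: every rule has nonempty left- and right-hand sides. -/
def IsRWS {α : Type*} (R : Set (List α × List α)) : Prop :=
  ∀ r ∈ R, r.1 ≠ [] ∧ r.2 ≠ []

/-- One-step reduction `W₁ →_R W₂`. -/
def Step {α : Type*} (R : Set (List α × List α)) (W₁ W₂ : List α) : Prop :=
  ∃ Z₁ Z₂ X Y, (X, Y) ∈ R ∧ W₁ = Z₁ ++ X ++ Z₂ ∧ W₂ = Z₁ ++ Y ++ Z₂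

/-- `→*_R`: the reflexive-transitive closure of one-step reduction. -/
def Steps {α : Type*} (R : Set (List α × List α)) : List α → List α → Prop :=
  Relation.ReflTransGen (Step R)

/-- Noetherian: no infinite reduction sequence. -/
def Noetherian {α : Type*} (R : Set (List α × List α)) : Prop :=
  ¬ ∃ g : ℕ → List α, ∀ i, Step R (g i) (g (i + 1))

/-- Confluence. -/
def Confluent {α : Type*} (R : Set (List α × List α)) : Prop :=
  ∀ U V W, Steps R U V → Steps R U W → ∃ X, Steps R V X ∧ Steps R W X

/-- Complete rewriting system: Noetherian and confluent. -/
def CompleteRWS {α : Type*} (R : Set (List α × List α)) : Prop :=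
  Noetherian R ∧ Confluent R

/-- `Irr R W`: `W ∈ A⁺` has no factor which is the left-hand side of a rule. -/
def Irr {α : Type*} (R : Set (List α × List α)) (W : List α) : Prop :=
  W ≠ [] ∧ ¬ ∃ Z₁ X Z₂, (∃ Y, (X, Y) ∈ R) ∧ W = Z₁ ++ X ++ Z₂

/-- `Presents R f`: the map sending a nonempty word `u` over `α` to `f u` exhibits the
semigroup `S` as the semigroup presented by `[α; R]`, i.e. the semigroup `A⁺/↔*_R`:
`f` restricted to nonempty words is a surjective semigroup homomorphism whose kernel
is the congruence `↔*_R` generated by `R` (the value of `f` on the empty word is irrelevant). -/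
def Presents {α S : Type*} [Semigroup S] (R : Set (List α × List α)) (f : List α → S) : Prop :=
  (∀ u v : List α, u ≠ [] → v ≠ [] → f (u ++ v) = f u * f v) ∧
  (∀ x : S, ∃ u : List α, u ≠ [] ∧ f u = x) ∧
  (∀ u v : List α, u ≠ [] → v ≠ [] → (f u = f v ↔ Relation.EqvGen (Step R) u v))

/-- `S` has a finite complete rewriting system. -/
def HasFCRS (S : Type*) [Semigroup S] : Prop :=
  ∃ (α : Type) (R : Set (List α × List α)) (f : List α → S),
    Finite α ∧ R.Finite ∧ IsRWS R ∧ CompleteRWS R ∧ Presents R f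

/-! ### The construction of Section 3: adjoining a letter `s` with `φ(s) = W₀`.
The alphabet `B = A ∪ {s}` is modelled as `α ⊕ Unit`, with `Sum.inl a` the letter
`a ∈ A` and `Sum.inr ()` the new letter `s`. -/

/-- The homomorphism `φ : B* → A*` with `φ(a) = a` for `a ∈ A` and `φ(s) = W₀`. -/
def phiS {α : Type*} (W₀ : List α) (l : List (α ⊕ Unit)) : List α :=
  l.flatMap (Sum.elim (fun a => [a]) (fun _ => W₀))

open scoped Classical in
/-- The function `ρ : A* → B*`: `ρ(ε) = ε`; if `W = X₁W₀` ends with `W₀` then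
`ρ(W) = ρ(X₁)s`; otherwise `W = X₂a` with `a ∈ A` and `ρ(W) = ρ(X₂)a`. -/
noncomputable def rhoS {α : Type*} (W₀ : List α) (W : List α) : List (α ⊕ Unit) :=
  if hW : W = [] then []
  else if h : W₀ ≠ [] ∧ W₀ <:+ W then
    rhoS W₀ (W.take (W.length - W₀.length)) ++ [Sum.inr ()]
  else
    rhoS W₀ W.dropLast ++ [Sum.inl (W.getLast hW)]
termination_by W.length
decreasing_by
  · have h1 : W₀.length ≤ W.length := h.2.length_le
    have h2 : 0 < W₀.length := List.length_pos_iff.mpr h.1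
    simp only [List.length_take]
    omega
  · have h3 : 0 < W.length := List.length_pos_iff.mpr hW
    simp only [List.length_dropLast]
    omega

/-- Rules of the form (C1): `ρ(X) → ρ(Y)` for each rule `X → Y` of `R`. -/
def C1 {α : Type*} (R : Set (List α × List α)) (W₀ : List α) :
    Set (List (α ⊕ Unit) × List (α ⊕ Unit)) :=
  {p | ∃ X Y : List α, (X, Y) ∈ R ∧ p = (rhoS W₀ X, rhoS W₀ Y)}

/-- The rule (C2): `W₀ → s`. -/
def C2 {α : Type*} (W₀ : List α) : Set (List (α ⊕ Unit) × List (α ⊕ Unit)) :=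
  {p | p = (W₀.map Sum.inl, [Sum.inr ()])}

/-- Rules of the form (C3): for each rule `X₁X₂ → Y₁` of `R` with `W₀ = Z₁X₁`
(`X₁, Y₁ ∈ A⁺`, `X₂, Z₁ ∈ A*`), the rule `ρ(Z₁X₁X₂) → ρ(Y₁')` where
`Z₁X₁X₂ →*_R Y₁' ∈ Irr(R)`. -/
def C3 {α : Type*} (R : Set (List α × List α)) (W₀ : List α) :
    Set (List (α ⊕ Unit) × List (α ⊕ Unit)) :=
  {p | ∃ X₁ X₂ Y₁ Z₁ Y₁' : List α, X₁ ≠ [] ∧ Y₁ ≠ [] ∧ (X₁ ++ X₂, Y₁) ∈ R ∧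
    W₀ = Z₁ ++ X₁ ∧ Steps R (Z₁ ++ X₁ ++ X₂) Y₁' ∧ Irr R Y₁' ∧
    p = (rhoS W₀ (Z₁ ++ X₁ ++ X₂), rhoS W₀ Y₁')}

/-- Rules of the form (C4): for each rule `X₂X₁ → Y₁` of `R` with `W₀ = X₁Z₁`
(`X₁, Y₁ ∈ A⁺`, `X₂, Z₁ ∈ A*`), the rule `ρ(X₂X₁Z₁) → ρ(Y₁')` where
`X₂X₁Z₁ →*_R Y₁' ∈ Irr(R)`. -/
def C4 {α : Type*} (R : Set (List α × List α)) (W₀ : List α) :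
    Set (List (α ⊕ Unit) × List (α ⊕ Unit)) :=
  {p | ∃ X₁ X₂ Y₁ Z₁ Y₁' : List α, X₁ ≠ [] ∧ Y₁ ≠ [] ∧ (X₂ ++ X₁, Y₁) ∈ R ∧
    W₀ = X₁ ++ Z₁ ∧ Steps R (X₂ ++ X₁ ++ Z₁) Y₁' ∧ Irr R Y₁' ∧
    p = (rhoS W₀ (X₂ ++ X₁ ++ Z₁), rhoS W₀ Y₁')}

/-- Rules of the form (C5): for each rule `X₂X₃X₄ → Y₁` of `R` with `W₀ = X₄X₅ = X₁X₂`
(`X₂, X₄, Y₁ ∈ A⁺`, `X₁, X₃, X₅ ∈ A*`), the rule `ρ(X₁X₂X₃X₄X₅) → ρ(Y₁')` where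
`X₁X₂X₃X₄X₅ →*_R Y₁' ∈ Irr(R)`. -/
def C5 {α : Type*} (R : Set (List α × List α)) (W₀ : List α) :
    Set (List (α ⊕ Unit) × List (α ⊕ Unit)) :=
  {p | ∃ X₁ X₂ X₃ X₄ X₅ Y₁ Y₁' : List α, X₂ ≠ [] ∧ X₄ ≠ [] ∧ Y₁ ≠ [] ∧
    (X₂ ++ X₃ ++ X₄, Y₁) ∈ R ∧ W₀ = X₄ ++ X₅ ∧ W₀ = X₁ ++ X₂ ∧
    Steps R (X₁ ++ X₂ ++ X₃ ++ X₄ ++ X₅) Y₁' ∧ Irr R Y₁' ∧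
    p = (rhoS W₀ (X₁ ++ X₂ ++ X₃ ++ X₄ ++ X₅), rhoS W₀ Y₁')}

/-- Rules of the form (C6): `sX₃ → X₁s` whenever `W₀ = X₁X₂ = X₂X₃` with
`X₁, X₂, X₃ ∈ A⁺`. -/
def C6 {α : Type*} (W₀ : List α) : Set (List (α ⊕ Unit) × List (α ⊕ Unit)) :=
  {p | ∃ X₁ X₂ X₃ : List α, X₁ ≠ [] ∧ X₂ ≠ [] ∧ X₃ ≠ [] ∧
    W₀ = X₁ ++ X₂ ∧ W₀ = X₂ ++ X₃ ∧
    p = (Sum.inr () :: X₃.map Sum.inl, X₁.map Sum.inl ++ [Sum.inr ()])}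

/-- The rewriting system `R_S` over `B = A ∪ {s}`. -/
def RS {α : Type*} (R : Set (List α × List α)) (W₀ : List α) :
    Set (List (α ⊕ Unit) × List (α ⊕ Unit)) :=
  C1 R W₀ ∪ C2 W₀ ∪ C3 R W₀ ∪ C4 R W₀ ∪ C5 R W₀ ∪ C6 W₀


/-! ### Auxiliary lemmas for Lemma 3.4 -/

section Aux

variable {α : Type*}

lemma rhoS_nil (W₀ : List α) : rhoS W₀ [] = [] := by
  rw [rhoS]; simp

lemma rhoS_append_self (W₀ : List α) (h : W₀ ≠ []) (X : List α) :
    rhoS W₀ (X ++ W₀) = rhoS W₀ X ++ [Sum.inr ()] := by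
  rw [rhoS, dif_neg (by simp [h]), dif_pos ⟨h, List.suffix_append X W₀⟩]
  congr 2
  rw [List.length_append, Nat.add_sub_cancel, List.take_left]

lemma rhoS_concat (W₀ X : List α) (a : α) (h : ¬ W₀ <:+ X ++ [a]) :
    rhoS W₀ (X ++ [a]) = rhoS W₀ X ++ [Sum.inl a] := by
  rw [rhoS, dif_neg (by simp), dif_neg (by tauto)]
  congr 2
  · exact List.dropLast_concat
  · rw [List.getLast_append]; simp

lemma step_context {β : Type*} {Rr : Set (List β × List β)} {u v : List β}
    (x y : List β) (h : Step Rr u v) : Step Rr (x ++ u ++ y) (x ++ v ++ y) := by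
  obtain ⟨Z₁, Z₂, X, Y, hm, h1, h2⟩ := h
  exact ⟨x ++ Z₁, Z₂ ++ y, X, Y, hm, by subst h1; simp, by subst h2; simp⟩

lemma steps_context {β : Type*} {Rr : Set (List β × List β)} {u v : List β}
    (x y : List β) (h : Steps Rr u v) : Steps Rr (x ++ u ++ y) (x ++ v ++ y) :=
  Relation.ReflTransGen.lift (fun w => x ++ w ++ y) (fun _ _ hs => step_context x y hs) _ _ h

lemma C2_mem_RS (R : Set (List α × List α)) (W₀ : List α) :
    (W₀.map Sum.inl, [Sum.inr ()]) ∈ RS R W₀ := by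
  simp only [RS, Set.mem_union]
  exact Or.inl (Or.inl (Or.inl (Or.inl (Or.inr rfl))))

lemma C6_mem_RS (R : Set (List α × List α)) (W₀ : List α) {X₁ X₂ X₃ : List α}
    (h₁ : X₁ ≠ []) (h₂ : X₂ ≠ []) (h₃ : X₃ ≠ []) (e₁ : W₀ = X₁ ++ X₂) (e₂ : W₀ = X₂ ++ X₃) :
    (Sum.inr () :: X₃.map Sum.inl, X₁.map Sum.inl ++ [Sum.inr ()]) ∈ RS R W₀ := by
  simp only [RS, Set.mem_union]
  exact Or.inr ⟨X₁, X₂, X₃, h₁, h₂, h₃, e₁, e₂, rfl⟩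

/-- The "split" lemma: peeling `T` off the right of `X₁ ++ T`, either no occurrence of
`W₀` as a suffix is ever found (and `ρ(X₁T) = ρ(X₁)T`), or the first one found gives
`ρ(X₁T) = ρ(Y) s (T.drop k)` with `W₀ = z (T.take k)` and `Y W₀ = X₁ (T.take k)`. -/
lemma rhoS_split (W₀ : List α) (hn : 2 ≤ W₀.length) :
    ∀ T X₁ : List α, T.length ≤ W₀.length →
      rhoS W₀ (X₁ ++ T) = rhoS W₀ X₁ ++ T.map Sum.inl ∨
      ∃ (k : ℕ) (Y z : List α), 1 ≤ k ∧ k ≤ T.length ∧ W₀ = z ++ T.take k ∧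
        Y ++ W₀ = X₁ ++ T.take k ∧
        rhoS W₀ (X₁ ++ T) = rhoS W₀ Y ++ Sum.inr () :: (T.drop k).map Sum.inl := by
  have hW₀ne : W₀ ≠ [] := by intro h; rw [h] at hn; simp at hn
  intro T
  induction T using List.reverseRecOn with
  | nil => intro X₁ _; left; simp
  | append_singleton T' b ih =>
    intro X₁ hlen
    by_cases hsuf : W₀ <:+ X₁ ++ (T' ++ [b])
    · right
      obtain ⟨U, hU⟩ := hsuf
      have hTsuf : (T' ++ [b]) <:+ W₀ := by
        have h₂ : W₀ <:+ X₁ ++ (T' ++ [b]) := ⟨U, hU⟩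
        exact List.suffix_of_suffix_length_le (List.suffix_append _ _) h₂ hlen
      obtain ⟨z, hz⟩ := hTsuf
      refine ⟨(T' ++ [b]).length, U, z, by simp, le_refl _, ?_, ?_, ?_⟩
      · rw [List.take_length]; exact hz.symm
      · rw [List.take_length]; exact hU
      · rw [List.drop_length, ← hU, rhoS_append_self W₀ hW₀ne]; simp
    · have hρ : rhoS W₀ (X₁ ++ (T' ++ [b])) = rhoS W₀ (X₁ ++ T') ++ [Sum.inl b] := by
        rw [← List.append_assoc]
        exact rhoS_concat W₀ (X₁ ++ T') b (by rwa [List.append_assoc])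
      rcases ih X₁ (by simp at hlen ⊢; omega) with h | ⟨k, Y, z, hk1, hk2, hWz, hYe, hρ'⟩
      · left; rw [hρ, h]; simp
      · right
        refine ⟨k, Y, z, hk1, by simp; omega, ?_, ?_, ?_⟩
        · rwa [List.take_append_of_le_length hk2]
        · rwa [List.take_append_of_le_length hk2]
        · rw [hρ, hρ', List.drop_append_of_le_length hk2]; simp

/-- Property (P6) for a single letter of `A`:  `ρ(W)a →* ρ(Wa)`. -/
lemma rhoS_steps_concat (R : Set (List α × List α)) (W₀ : List α) (hn : 2 ≤ W₀.length) :
    ∀ (W : List α) (a : α),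
      Steps (RS R W₀) (rhoS W₀ W ++ [Sum.inl a]) (rhoS W₀ (W ++ [a])) := by
  have hW₀ne : W₀ ≠ [] := by intro h; rw [h] at hn; simp at hn
  have main : ∀ (N : ℕ) (W : List α) (a : α), W.length ≤ N →
      Steps (RS R W₀) (rhoS W₀ W ++ [Sum.inl a]) (rhoS W₀ (W ++ [a])) := by
    intro N
    induction N using Nat.strong_induction_on with
    | _ N IH =>
      intro W a hWN
      by_cases hsuf : W₀ <:+ W ++ [a]
      · obtain ⟨U, hU⟩ := hsuf
        have hW : W = U ++ W₀.dropLast := by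
          have h := congrArg List.dropLast hU
          rw [List.dropLast_append_of_ne_nil hW₀ne, List.dropLast_concat] at h
          exact h.symm
        set T := W₀.dropLast with hT
        have hW₀T : W₀ = T ++ [a] := by
          apply List.append_cancel_left (as := U)
          rw [hU, hW, List.append_assoc]
        have hTlen : T.length = W₀.length - 1 := by
          rw [hT, List.length_dropLast]
        have hUlen : U.length + W₀.length = W.length + 1 := by
          have := congrArg List.length hU
          simpa using this
        have hρWa : rhoS W₀ (W ++ [a]) = rhoS W₀ U ++ [Sum.inr ()] := by
          rw [← hU, rhoS_append_self W₀ hW₀ne]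
        rcases rhoS_split W₀ hn T U (by omega) with h | ⟨k, Y, z, hk1, hk2, hWz, hYe, hρ⟩
        · rw [hρWa, hW, h]
          refine Relation.ReflTransGen.single ?_
          refine ⟨rhoS W₀ U, [], W₀.map Sum.inl, [Sum.inr ()], C2_mem_RS R W₀, ?_, by simp⟩
          rw [hW₀T]; simp
        · have hzne : z ≠ [] := by
            intro h
            rw [h, List.nil_append] at hWz
            have := congrArg List.length hWz
            rw [List.length_take] at this
            omega
          have hX₂ne : T.take k ≠ [] := by
            intro h
            have := congrArg List.length h
            rw [List.length_take] at this
            simp only [List.length_nil] at this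
            omega
          have hYz : Y ++ z = U := by
            apply List.append_cancel_right (bs := T.take k)
            rw [List.append_assoc, ← hWz, hYe]
          have hW₀split : W₀ = T.take k ++ (T.drop k ++ [a]) := by
            rw [hW₀T, ← List.append_assoc, List.take_append_drop]
          have step1 : Step (RS R W₀) (rhoS W₀ W ++ [Sum.inl a])
              (rhoS W₀ Y ++ (z.map Sum.inl ++ [Sum.inr ()])) := by
            refine ⟨rhoS W₀ Y, [], Sum.inr () :: (T.drop k ++ [a]).map Sum.inl,
              z.map Sum.inl ++ [Sum.inr ()],
              C6_mem_RS R W₀ hzne hX₂ne (by simp) hWz hW₀split, ?_, by simp⟩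
            rw [hW, hρ]; simp
          have hYlt : Y.length + z.length < W.length := by
            have h1 := congrArg List.length hYz
            rw [List.length_append] at h1
            omega
          have hQgen : ∀ z' Y' : List α, Y'.length + z'.length < W.length →
              Steps (RS R W₀) (rhoS W₀ Y' ++ z'.map Sum.inl) (rhoS W₀ (Y' ++ z')) := by
            intro z'
            induction z' using List.reverseRecOn with
            | nil => intro Y' _; simpa [Steps] using Relation.ReflTransGen.refl
            | append_singleton z'' c ihz =>
              intro Y' hlt
              simp only [List.length_append, List.length_cons, List.length_nil] at hlt
              have h1 : Steps (RS R W₀) (rhoS W₀ Y' ++ z''.map Sum.inl ++ [Sum.inl c])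
                  (rhoS W₀ (Y' ++ z'') ++ [Sum.inl c]) := by
                have := steps_context (Rr := RS R W₀) [] [Sum.inl c]
                  (ihz Y' (by omega))
                simpa using this
              have h2 : Steps (RS R W₀) (rhoS W₀ (Y' ++ z'') ++ [Sum.inl c])
                  (rhoS W₀ ((Y' ++ z'') ++ [c])) := by
                refine IH (Y' ++ z'').length ?_ (Y' ++ z'') c (le_refl _)
                simp only [List.length_append]; omega
              have h3 := h1.trans h2
              simpa [List.append_assoc, Steps] using h3
          have hQ := hQgen z Y hYlt
          refine (Relation.ReflTransGen.single step1).trans ?_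
          have h4 := steps_context (Rr := RS R W₀) [] [Sum.inr ()] hQ
          rw [hρWa, ← hYz]
          simpa [List.append_assoc, Steps] using h4
      · rw [rhoS_concat W₀ W a hsuf]
        exact Relation.ReflTransGen.refl
  exact fun W a => main W.length W a (le_refl _)

end Aux

/-- **Lemma 3.4** (Property (P6)). `U' →*_{R_S} ρ(φ(U'))` for all `U' ∈ B⁺`. -/
theorem lemma_3_4 {α : Type*} (R : Set (List α × List α))
    (hαfin : Finite α) (hRfin : R.Finite) (hRWS : IsRWS R) (hcomp : CompleteRWS R)
    (W₀ : List α) (hW₀len : 1 < W₀.length) (hW₀irr : Irr R W₀)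
    (U' : List (α ⊕ Unit)) (hU' : U' ≠ []) :
    Steps (RS R W₀) U' (rhoS W₀ (phiS W₀ U')) := by
  have hn : 2 ≤ W₀.length := hW₀len
  have hW₀ne : W₀ ≠ [] := by intro h; rw [h] at hn; simp at hn
  clear hU'
  induction U' using List.reverseRecOn with
  | nil => simpa [phiS, rhoS_nil, Steps] using Relation.ReflTransGen.refl
  | append_singleton V' b ihV =>
    have h1 : Steps (RS R W₀) (V' ++ [b]) (rhoS W₀ (phiS W₀ V') ++ [b]) := by
      have := steps_context (Rr := RS R W₀) [] [b] ihV
      simpa using this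
    cases b with
    | inl a =>
      have h2 := rhoS_steps_concat R W₀ hn (phiS W₀ V') a
      have hφ : phiS W₀ (V' ++ [Sum.inl a]) = phiS W₀ V' ++ [a] := by simp [phiS]
      rw [hφ]
      exact h1.trans h2
    | inr u =>
      cases u
      have hφ : phiS W₀ (V' ++ [Sum.inr ()]) = phiS W₀ V' ++ W₀ := by simp [phiS]
      rw [hφ, rhoS_append_self W₀ hW₀ne]
      exact h1
end

section
/- For any U', V' ∈ B⁺ with U' →*_{R_S} V', one has φ(U') →*_R φ(V'). -/
lemma phiS_append {α : Type*} (W₀ : List α) (u v : List (α ⊕ Unit)) :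
    phiS W₀ (u ++ v) = phiS W₀ u ++ phiS W₀ v := by
  simp [phiS]

lemma phiS_map_inl {α : Type*} (W₀ : List α) (X : List α) :
    phiS W₀ (X.map Sum.inl) = X := by
  induction X with
  | nil => rfl
  | cons a t ih => simp_all [phiS]

lemma phi_rho {α : Type*} (W₀ : List α) (W : List α) :
    phiS W₀ (rhoS W₀ W) = W := by
  by_cases hW : W = []
  · subst hW; simp [rhoS, phiS]
  rw [rhoS, dif_neg hW]
  split_ifs with h
  · obtain ⟨t, ht⟩ := h.2
    have hlen : W.length - W₀.length = t.length := by
      subst ht; simp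
    have htake : W.take (W.length - W₀.length) = t := by
      rw [hlen]; subst ht; simp
    rw [htake, phiS_append]
    have h5 := phi_rho W₀ t
    show phiS W₀ (rhoS W₀ t) ++ phiS W₀ [Sum.inr ()] = W
    rw [h5]
    simpa [phiS] using ht
  · rw [phiS_append]
    have h5 := phi_rho W₀ W.dropLast
    show phiS W₀ (rhoS W₀ W.dropLast) ++ phiS W₀ [Sum.inl (W.getLast hW)] = W
    rw [h5]
    simpa [phiS] using List.dropLast_append_getLast hW
termination_by W.length
decreasing_by
  · have h2 : 0 < W₀.length := List.length_pos_iff.mpr h.1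
    have h4 := congrArg List.length ht
    simp only [List.length_append] at h4
    omega
  · have h3 : 0 < W.length := List.length_pos_iff.mpr hW
    simp only [List.length_dropLast]
    omega

lemma steps_context_s11 {α : Type*} (R : Set (List α × List α)) (Z₁ Z₂ U V : List α)
    (h : Steps R U V) : Steps R (Z₁ ++ U ++ Z₂) (Z₁ ++ V ++ Z₂) := by
  induction h with
  | refl => exact Relation.ReflTransGen.refl
  | tail _ hstep ih =>
    refine ih.tail ?_
    obtain ⟨A, B, X, Y, hR, h1, h2⟩ := hstep
    exact ⟨Z₁ ++ A, B ++ Z₂, X, Y, hR, by simp [h1], by simp [h2]⟩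

lemma rule_phi {α : Type*} (R : Set (List α × List α)) (W₀ : List α)
    (X Y : List (α ⊕ Unit)) (hR : (X, Y) ∈ RS R W₀) :
    Steps R (phiS W₀ X) (phiS W₀ Y) := by
  rcases hR with ((((h1 | h2) | h3) | h4) | h5) | h6
  · obtain ⟨X₀, Y₀, hmem, hp⟩ := h1
    obtain ⟨rfl, rfl⟩ := Prod.mk.injEq .. ▸ hp
    rw [phi_rho, phi_rho]
    exact Relation.ReflTransGen.single ⟨[], [], X₀, Y₀, hmem, by simp, by simp⟩
  · simp only [C2, Set.mem_setOf_eq, Prod.mk.injEq] at h2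
    obtain ⟨rfl, rfl⟩ := h2
    have : phiS W₀ (W₀.map Sum.inl) = phiS W₀ [Sum.inr ()] := by
      rw [phiS_map_inl]; simp [phiS]
    rw [this]
    exact Relation.ReflTransGen.refl
  · obtain ⟨X₁, X₂, Y₁, Z₁, Y₁', _, _, _, _, hsteps, _, hp⟩ := h3
    obtain ⟨rfl, rfl⟩ := Prod.mk.injEq .. ▸ hp
    rw [phi_rho, phi_rho]; exact hsteps
  · obtain ⟨X₁, X₂, Y₁, Z₁, Y₁', _, _, _, _, hsteps, _, hp⟩ := h4
    obtain ⟨rfl, rfl⟩ := Prod.mk.injEq .. ▸ hp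
    rw [phi_rho, phi_rho]; exact hsteps
  · obtain ⟨X₁, X₂, X₃, X₄, X₅, Y₁, Y₁', _, _, _, _, _, _, hsteps, _, hp⟩ := h5
    obtain ⟨rfl, rfl⟩ := Prod.mk.injEq .. ▸ hp
    rw [phi_rho, phi_rho]; exact hsteps
  · obtain ⟨X₁, X₂, X₃, _, _, _, hW1, hW2, hp⟩ := h6
    obtain ⟨rfl, rfl⟩ := Prod.mk.injEq .. ▸ hp
    have : phiS W₀ (Sum.inr () :: List.map Sum.inl X₃)
        = phiS W₀ (List.map Sum.inl X₁ ++ [Sum.inr ()]) := by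
      show phiS W₀ ([Sum.inr ()] ++ List.map Sum.inl X₃) = _
      rw [phiS_append, phiS_append, phiS_map_inl, phiS_map_inl]
      have h1' : phiS W₀ [Sum.inr ()] = W₀ := by simp [phiS]
      rw [h1']
      conv_lhs => rw [hW1]
      conv_rhs => rw [hW2]
      simp
    rw [this]
    exact Relation.ReflTransGen.refl

/-- **Lemma 3.8** (Property (P2)). For any `U', V' ∈ B⁺` with `U' →*_{R_S} V'`,
one has `φ(U') →*_R φ(V')`. -/
theorem lemma_3_8 {α : Type*} (R : Set (List α × List α))
    (hαfin : Finite α) (hRfin : R.Finite) (hRWS : IsRWS R) (hcomp : CompleteRWS R)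
    (W₀ : List α) (hW₀len : 1 < W₀.length) (hW₀irr : Irr R W₀)
    (U' V' : List (α ⊕ Unit)) (hU' : U' ≠ [])
    (h : Steps (RS R W₀) U' V') :
    Steps R (phiS W₀ U') (phiS W₀ V') := by
  induction h with
  | refl => exact Relation.ReflTransGen.refl
  | tail _ hstep ih =>
    refine ih.trans ?_
    obtain ⟨Z₁, Z₂, X, Y, hR, h1, h2⟩ := hstep
    subst h1; subst h2
    rw [phiS_append, phiS_append, phiS_append, phiS_append]
    exact steps_context_s11 R _ _ _ _ (rule_phi R W₀ X Y hR)
end
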